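/- Let X = {(2^m, 2^k) : m, k ∈ ℤ, m ≥ 0, k ≥ 0} ⊆ ℕ², and let E = {(a,b) ∈ ℕ² : b ≤ log₂ a} ∪ {(a,b) ∈ ℕ² : a ≤ log₂ b}. Then ℕ² \ E ⊆ FS(X); that is, every pair (a,b) of positive integers with b > log₂ a and a > log₂ b can be written as a sum of finitely many distinct elements of X. -/

import Mathlib

open scoped BigOperators

/-- `FS X` is the set of all sums of finitely many distinct elements of `X`
(sums over finite nonempty subsets of `X`). -/
def FS {α : Type*} [AddCommMonoid α] (X : Set α) : Set α :=
  {s | ∃ F : Finset α, F.Nonempty ∧ ↑F ⊆ X ∧ s = ∑ x ∈ F, x}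

/-- `X = {(2^m, 2^k) : m, k ≥ 0}`. -/
def X2 : Set (ℕ × ℕ) := {p | ∃ m k : ℕ, p = (2 ^ m, 2 ^ k)}

/-- number of ones in binary -/
def sbits (n : ℕ) : ℕ := n.bitIndices.length

lemma sbits_le_self (n : ℕ) : sbits n ≤ n := by
  conv_rhs => rw [← Nat.twoPowSum_bitIndices n]
  rw [sbits, ← List.length_map (fun i => 2 ^ i)]
  refine List.length_le_sum_of_one_le _ ?_
  intro x hx
  obtain ⟨i, _, rfl⟩ := List.mem_map.1 hx
  exact Nat.one_le_two_pow

lemma sbits_le_log (n : ℕ) (hn : 1 ≤ n) : sbits n ≤ Nat.log 2 n + 1 := by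
  have hnd : n.bitIndices.Nodup := Nat.bitIndices_sorted.nodup
  have hsub : n.bitIndices.toFinset ⊆ Finset.range (Nat.log 2 n + 1) := by
    intro k hk
    rw [List.mem_toFinset] at hk
    have h2 := Nat.two_pow_le_of_mem_bitIndices hk
    rw [Finset.mem_range, Nat.lt_succ_iff]
    exact (Nat.le_log_iff_pow_le one_lt_two (by omega)).2 h2
  have := Finset.card_le_card hsub
  rwa [List.card_toFinset, hnd.dedup, Finset.card_range] at this

lemma sbits_pos (n : ℕ) (hn : 1 ≤ n) : 1 ≤ sbits n := by
  rw [Nat.one_le_iff_ne_zero]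
  intro h
  rw [sbits, List.length_eq_zero_iff] at h
  have := Nat.twoPowSum_bitIndices n
  rw [h] at this
  simp at this
  omega

/-- Write `n` as a sum of exactly `t` powers of two. -/
lemma exists_rep (n : ℕ) : ∀ t, sbits n ≤ t → t ≤ n →
    ∃ l : List ℕ, l.length = t ∧ (∀ x ∈ l, ∃ m : ℕ, x = 2 ^ m) ∧ l.sum = n := by
  refine Nat.le_induction ?_ ?_
  · intro _
    refine ⟨n.bitIndices.map (fun i => 2 ^ i), by simp [sbits], ?_, by simp⟩
    intro x hx
    obtain ⟨i, _, rfl⟩ := List.mem_map.1 hx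
    exact ⟨i, rfl⟩
  · intro t _ ih hle
    obtain ⟨l, hlen, hpow, hsum⟩ := ih (by omega)
    -- some element of l is > 1
    have hex : ∃ x ∈ l, 1 < x := by
      by_contra h
      push_neg at h
      have : l.sum ≤ l.length * 1 := by
        apply List.sum_le_card_nsmul
        intro x hx; exact h x hx
      omega
    obtain ⟨x, hxl, hx1⟩ := hex
    obtain ⟨m, rfl⟩ := hpow x hxl
    have hm : m ≠ 0 := by rintro rfl; simp at hx1
    refine ⟨2 ^ (m - 1) :: 2 ^ (m - 1) :: l.erase (2 ^ m), ?_, ?_, ?_⟩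
    · have hpos := List.length_pos_iff.2 (List.ne_nil_of_mem hxl)
      simp [List.length_erase_of_mem hxl, hlen]
      omega
    · intro y hy
      simp only [List.mem_cons] at hy
      rcases hy with rfl | rfl | hy
      · exact ⟨m - 1, rfl⟩
      · exact ⟨m - 1, rfl⟩
      · exact hpow y (List.mem_of_mem_erase hy)
    · have hperm := List.perm_cons_erase hxl
      have := hperm.sum_eq
      simp only [List.sum_cons] at this ⊢
      have h2 : 2 ^ (m - 1) + 2 ^ (m - 1) = 2 ^ m := by
        rw [← two_mul, ← pow_succ']
        congr 1; omega
      omega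

lemma fs_core (a b : ℕ) (ha : 1 ≤ a) (hb : 1 ≤ b)
    (hab : sbits a ≤ sbits b) (hba : sbits b ≤ a) : (a, b) ∈ FS X2 := by
  obtain ⟨l, hlen, hpow, hsum⟩ := exists_rep a (sbits b) hab hba
  set K : List ℕ := b.bitIndices.map (fun i => 2 ^ i) with hK
  have hKlen : K.length = sbits b := by simp [hK, sbits]
  have hKnd : K.Nodup := by
    refine List.Nodup.map ?_ Nat.bitIndices_sorted.nodup
    exact fun i j h => Nat.pow_right_injective le_rfl h
  set P : List (ℕ × ℕ) := l.zip K with hP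
  have hPlen : P.length = sbits b := by
    simp [hP, List.length_zip, hlen, hKlen]
  have hsnd : P.map Prod.snd = K := List.map_snd_zip (by omega)
  have hfst : P.map Prod.fst = l := List.map_fst_zip (by omega)
  have hPnd : P.Nodup := by
    have : (P.map Prod.snd).Nodup := hsnd ▸ hKnd
    exact this.of_map
  refine ⟨P.toFinset, ?_, ?_, ?_⟩
  · rw [← Finset.card_pos, List.card_toFinset, hPnd.dedup, hPlen]
    exact sbits_pos b hb
  · intro p hp
    simp only [Finset.coe_sort_coe, List.coe_toFinset, Set.mem_setOf_eq] at hp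
    obtain ⟨h1, h2⟩ := List.of_mem_zip hp
    obtain ⟨m, hm⟩ := hpow _ h1
    obtain ⟨i, _, hi⟩ := List.mem_map.1 h2
    exact ⟨m, i, by rw [← hm, hi]⟩
  · have hsumP : ∑ x ∈ P.toFinset, x = P.sum := by
      rw [List.sum_toFinset _ hPnd]
      simp
    rw [hsumP]
    have h1 : P.sum.1 = a := by
      rw [← hsum, ← hfst]
      exact (map_list_sum (AddMonoidHom.fst ℕ ℕ) P).symm ▸ rfl
    have h2 : P.sum.2 = b := by
      have : (P.map Prod.snd).sum = b := by
        rw [hsnd, hK]; exact Nat.twoPowSum_bitIndices b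
      rw [← this]
      exact (map_list_sum (AddMonoidHom.snd ℕ ℕ) P).symm ▸ rfl
    exact Prod.ext h1.symm h2.symm

lemma fs_swap {a b : ℕ} (h : (a, b) ∈ FS X2) : (b, a) ∈ FS X2 := by
  obtain ⟨F, hne, hsub, hsum⟩ := h
  refine ⟨F.image Prod.swap, hne.image _, ?_, ?_⟩
  · intro p hp
    simp only [Finset.coe_image, Set.mem_image] at hp
    obtain ⟨q, hq, rfl⟩ := hp
    obtain ⟨m, k, rfl⟩ := hsub hq
    exact ⟨k, m, rfl⟩
  · rw [Finset.sum_image (fun x _ y _ h => Prod.swap_injective h)]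
    have : ∑ x ∈ F, x.swap = (∑ x ∈ F, x).swap := by
      exact (map_sum (AddEquiv.prodComm : ℕ × ℕ ≃+ ℕ × ℕ) _ _).symm
    rw [this, ← hsum]
    rfl

/-- Every `(a,b) ∈ ℕ²` with `b > log₂ a` and `a > log₂ b` belongs to `FS(X)`,
i.e. `ℕ² \ E ⊆ FS(X)`. -/
theorem stmt_5 (a b : ℕ) (ha : 1 ≤ a) (hb : 1 ≤ b)
    (h1 : Real.logb 2 a < (b : ℝ)) (h2 : Real.logb 2 b < (a : ℝ)) :
    (a, b) ∈ FS X2 := by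
  have hcast : ∀ x y : ℕ, 1 ≤ x → Real.logb 2 x < (y : ℝ) → x < 2 ^ y := by
    intro x y hx h
    have hx0 : (0 : ℝ) < x := by positivity
    rw [Real.logb_lt_iff_lt_rpow one_lt_two hx0] at h
    have : (x : ℝ) < ((2 ^ y : ℕ) : ℝ) := by
      rwa [Nat.cast_pow, Nat.cast_ofNat, ← Real.rpow_natCast 2 y]
    exact_mod_cast this
  have hab : a < 2 ^ b := hcast a b ha h1
  have hba : b < 2 ^ a := hcast b a hb h2
  have hsa : sbits a ≤ b := by
    have := sbits_le_log a ha
    have hlog : Nat.log 2 a < b := (Nat.log_lt_iff_lt_pow one_lt_two (by omega)).2 hab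
    omega
  have hsb : sbits b ≤ a := by
    have := sbits_le_log b hb
    have hlog : Nat.log 2 b < a := (Nat.log_lt_iff_lt_pow one_lt_two (by omega)).2 hba
    omega
  rcases le_total (sbits a) (sbits b) with h | h
  · exact fs_core a b ha hb h hsb
  · exact fs_swap (fs_core b a hb ha h hsa)
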